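/- For k ≥ 1, ε > 0 and y ≥ ε, define m_k(y,ε) = ∫ over {ε ≤ ξ_1 ≤ ⋯ ≤ ξ_k, ξ_1+⋯+ξ_k = y} of dξ/(ξ_1⋯ξ_k). Then m_k(y,ε) ≤ (log(y/ε))^(k-1) / ((k-1)! · y). Moreover, for any fixed A ≥ 1, uniformly for y ≥ 100A²ε > 0 and 1 ≤ k ≤ A·log(y/ε), one has m_k(y,ε) ≫_A (log(y/ε))^(k-1) / ((k-1)! · y). -/

import Mathlib

open scoped Classical ENNReal NNReal
open MeasureTheory Set

noncomputable section

namespace SimplexAux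

def Sset (n : ℕ) (y ε : ℝ) : Set (Fin n → ℝ) :=
  {b | (∀ i j : Fin n, i ≤ j → b i ≤ b j) ∧
      (∀ i, ε ≤ b i) ∧ (∀ i, b i ≤ y - ∑ j, b j) ∧ ε ≤ y - ∑ j, b j}

def ff (n : ℕ) (y : ℝ) (b : Fin n → ℝ) : ℝ≥0∞ :=
  ENNReal.ofReal (((∏ i, b i) * (y - ∑ j, b j))⁻¹)

def Lam (n : ℕ) (y ε : ℝ) : ℝ≥0∞ := ∫⁻ b in Sset n y ε, ff n y b

lemma measurable_sumFin (n : ℕ) : Measurable (fun b : Fin n → ℝ => ∑ j, b j) :=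
  Finset.univ.measurable_sum fun j _ => measurable_pi_apply j

lemma measurableSet_Sset (n : ℕ) (y ε : ℝ) : MeasurableSet (Sset n y ε) := by
  have h1 : ∀ i j : Fin n, MeasurableSet {b : Fin n → ℝ | i ≤ j → b i ≤ b j} := by
    intro i j
    by_cases h : i ≤ j
    · simp only [h, true_implies]
      exact measurableSet_le (measurable_pi_apply i) (measurable_pi_apply j)
    · simp only [h, false_implies, Set.setOf_true]
      exact MeasurableSet.univ
  have : Sset n y ε = (⋂ i, ⋂ j, {b : Fin n → ℝ | i ≤ j → b i ≤ b j}) ∩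
      ((⋂ i, {b : Fin n → ℝ | ε ≤ b i}) ∩
      ((⋂ i, {b : Fin n → ℝ | b i ≤ y - ∑ j, b j}) ∩ {b : Fin n → ℝ | ε ≤ y - ∑ j, b j})) := by
    ext b
    simp only [Sset, Set.mem_setOf_eq, Set.mem_inter_iff, Set.mem_iInter]
  rw [this]
  refine ((MeasurableSet.iInter fun i => MeasurableSet.iInter fun j => h1 i j).inter
    (MeasurableSet.inter (MeasurableSet.iInter fun i => ?_)
      (MeasurableSet.inter (MeasurableSet.iInter fun i => ?_) ?_)))
  · exact measurableSet_le measurable_const (measurable_pi_apply i)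
  · exact measurableSet_le (measurable_pi_apply i) (measurable_const.sub (measurable_sumFin n))
  · exact measurableSet_le measurable_const (measurable_const.sub (measurable_sumFin n))

lemma measurable_ff (n : ℕ) (y : ℝ) : Measurable (ff n y) :=
  ENNReal.measurable_ofReal.comp
    (((Finset.univ.measurable_prod fun i _ => measurable_pi_apply i).mul
      (measurable_const.sub (measurable_sumFin n))).inv)

lemma Sset_eq_empty {n : ℕ} {y ε : ℝ} (hε : 0 < ε) (h : y < ε) : Sset n y ε = ∅ := by
  ext c
  simp only [Sset, Set.mem_setOf_eq, Set.mem_empty_iff_false, iff_false]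
  rintro ⟨-, h2, -, h4⟩
  have hsum : 0 ≤ ∑ j, c j := Finset.sum_nonneg fun j _ => le_trans hε.le (h2 j)
  linarith

lemma Lam_eq_zero {n : ℕ} {y ε : ℝ} (hε : 0 < ε) (h : y < ε) : Lam n y ε = 0 := by
  rw [Lam, Sset_eq_empty hε h, Measure.restrict_empty, lintegral_zero_measure]

lemma cons_mem_Sset {n : ℕ} {y ε t : ℝ} (ht : ε ≤ t) (c : Fin n → ℝ) :
    (Fin.cons t c : Fin (n+1) → ℝ) ∈ Sset (n+1) y ε ↔ c ∈ Sset n (y - t) t := by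
  have hsum : ∑ j, (Fin.cons t c : Fin (n+1) → ℝ) j = t + ∑ j, c j := Fin.sum_cons t c
  simp only [Sset, Set.mem_setOf_eq, hsum]
  constructor
  · rintro ⟨h1, h2, h3, h4⟩
    refine ⟨fun i j hij => ?_, fun i => ?_, fun i => ?_, ?_⟩
    · have := h1 i.succ j.succ (Fin.succ_le_succ_iff.mpr hij)
      simpa using this
    · have := h1 0 i.succ (Fin.zero_le _)
      simpa using this
    · have := h3 i.succ
      simpa [sub_sub] using this
    · have := h3 0
      simpa [sub_sub] using this
  · rintro ⟨h1, h2, h3, h4⟩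
    refine ⟨fun i j hij => ?_, fun i => ?_, fun i => ?_, ?_⟩
    · induction i using Fin.cases with
      | zero =>
        induction j using Fin.cases with
        | zero => exact le_refl _
        | succ j => simpa using h2 j
      | succ i =>
        induction j using Fin.cases with
        | zero => simp [Fin.le_def] at hij
        | succ j =>
          have := h1 i j (Fin.succ_le_succ_iff.mp hij)
          simpa using this
    · induction i using Fin.cases with
      | zero => simpa using ht
      | succ i => simpa using le_trans ht (h2 i)
    · induction i using Fin.cases with
      | zero => simpa [sub_sub] using h4
      | succ i => simpa [sub_sub] using h3 i
    · have h4' : t ≤ y - t - ∑ j, c j := h4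
      linarith

lemma Lam_succ (n : ℕ) (y ε : ℝ) (hε : 0 < ε) :
    Lam (n+1) y ε
      = ∫⁻ t : ℝ, Set.indicator (Ici ε) (fun t => ENNReal.ofReal t⁻¹ * Lam n (y - t) t) t := by
  classical
  have hS := measurableSet_Sset (n+1) y ε
  set F : (Fin (n+1) → ℝ) → ℝ≥0∞ := (Sset (n+1) y ε).indicator (ff (n+1) y) with hF
  have hFm : Measurable F := (measurable_ff (n+1) y).indicator hS
  have hmp : MeasurePreserving
      (MeasurableEquiv.piFinSuccAbove (fun _ : Fin (n+1) => ℝ) 0).symm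
      (volume : Measure (ℝ × (Fin n → ℝ))) volume :=
    (MeasureTheory.volume_preserving_piFinSuccAbove (fun _ : Fin (n+1) => ℝ) 0).symm
  have he : ∀ (t : ℝ) (c : Fin n → ℝ),
      (MeasurableEquiv.piFinSuccAbove (fun _ : Fin (n+1) => ℝ) 0).symm (t, c)
        = Fin.cons t c := by
    intro t c
    simp [MeasurableEquiv.piFinSuccAbove, MeasurableEquiv.symm, Fin.insertNthEquiv,
      Fin.insertNth_zero']
  have h1 : Lam (n+1) y ε = ∫⁻ p : ℝ × (Fin n → ℝ), F ((MeasurableEquiv.piFinSuccAbove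
      (fun _ : Fin (n+1) => ℝ) 0).symm p) := by
    rw [Lam, ← lintegral_indicator hS, ← hF,
      hmp.lintegral_comp_emb (MeasurableEquiv.measurableEmbedding _)]
  rw [h1, Measure.volume_eq_prod, lintegral_prod (fun p : ℝ × (Fin n → ℝ) =>
    F ((MeasurableEquiv.piFinSuccAbove (fun _ : Fin (n+1) => ℝ) 0).symm p))
    ((hFm.comp (MeasurableEquiv.measurable _)).aemeasurable)]
  congr 1
  ext t
  by_cases ht : ε ≤ t
  · have hmem : ∀ c : Fin n → ℝ, F ((MeasurableEquiv.piFinSuccAbove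
        (fun _ : Fin (n+1) => ℝ) 0).symm (t, c))
        = (Sset n (y - t) t).indicator (fun c => ENNReal.ofReal t⁻¹ * ff n (y - t) c) c := by
      intro c
      rw [he t c, hF]
      by_cases hc : c ∈ Sset n (y - t) t
      · rw [Set.indicator_of_mem ((cons_mem_Sset ht c).mpr hc),
          Set.indicator_of_mem hc]
        have hprod : ∏ i, (Fin.cons t c : Fin (n+1) → ℝ) i = t * ∏ i, c i := by
          rw [Fin.prod_univ_succ]; simp
        have hsum : ∑ j, (Fin.cons t c : Fin (n+1) → ℝ) j = t + ∑ j, c j := Fin.sum_cons t c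
        rw [ff, ff, hprod, hsum]
        have : (t * ∏ i, c i) * (y - (t + ∑ j, c j)) = t * ((∏ i, c i) * (y - t - ∑ j, c j)) := by
          ring
        rw [this, mul_inv, ENNReal.ofReal_mul (inv_nonneg.mpr (le_trans hε.le ht))]
      · rw [Set.indicator_of_notMem (fun hmem => hc ((cons_mem_Sset ht c).mp hmem)),
          Set.indicator_of_notMem hc]
    simp only [hmem]
    rw [lintegral_indicator (measurableSet_Sset n (y - t) t),
      lintegral_const_mul _ (measurable_ff n (y - t)),
      Set.indicator_of_mem (by exact ht : t ∈ Ici ε)]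
    rfl
  · have hnot : ∀ c : Fin n → ℝ, F ((MeasurableEquiv.piFinSuccAbove
        (fun _ : Fin (n+1) => ℝ) 0).symm (t, c)) = 0 := by
      intro c
      rw [he t c, hF, Set.indicator_of_notMem]
      intro hmem
      exact ht (by simpa using hmem.2.1 0)
    simp only [hnot, lintegral_zero, Set.indicator_of_notMem (fun h => ht h : t ∉ Ici ε)]

lemma Lam_zero {y ε : ℝ} (h : ε ≤ y) : Lam 0 y ε = ENNReal.ofReal y⁻¹ := by
  have hset : Sset 0 y ε = Set.univ := by
    ext c
    simp [Sset, h]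
  have hvol : (volume : Measure (Fin 0 → ℝ)) Set.univ = 1 := by
    rw [MeasureTheory.volume_pi, Measure.pi_univ]
    simp
  rw [Lam, hset, Measure.restrict_univ]
  have : ∀ b : Fin 0 → ℝ, ff 0 y b = ENNReal.ofReal y⁻¹ := by
    intro b
    simp [ff]
  simp only [this]
  rw [lintegral_const, hvol, mul_one]

lemma Lam_le : ∀ (n : ℕ) (y ε : ℝ), 0 < ε → ε ≤ y →
    Lam n y ε ≤ ENNReal.ofReal (Real.log (y/ε) ^ n / (n.factorial * y)) := by
  intro n
  induction n with
  | zero =>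
    intro y ε hε hεy
    rw [Lam_zero hεy]
    simp
  | succ n ih =>
    intro y ε hε hεy
    have hy : 0 < y := hε.trans_le hεy
    rw [Lam_succ n y ε hε]
    by_cases hhalf : ε ≤ y/2
    · -- main case
      set g : ℝ → ℝ := fun t => t⁻¹ *
        ((Real.log (y - t) - Real.log t) ^ n / (n.factorial * (y - t))) with hg
      have hptwise : ∀ t : ℝ,
          Set.indicator (Ici ε) (fun t => ENNReal.ofReal t⁻¹ * Lam n (y - t) t) t
            ≤ Set.indicator (Icc ε (y/2)) (fun t => ENNReal.ofReal (g t)) t := by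
        intro t
        by_cases ht : ε ≤ t
        · have h0t : 0 < t := hε.trans_le ht
          by_cases ht2 : t ≤ y/2
          · rw [Set.indicator_of_mem (by exact ht : t ∈ Ici ε),
              Set.indicator_of_mem (Set.mem_Icc.mpr ⟨ht, ht2⟩)]
            have hty : 0 < y - t := by linarith
            calc ENNReal.ofReal t⁻¹ * Lam n (y - t) t
                ≤ ENNReal.ofReal t⁻¹ * ENNReal.ofReal
                    (Real.log ((y-t)/t) ^ n / (n.factorial * (y - t))) :=
                  mul_le_mul_right (ih (y - t) t h0t (by linarith)) _
              _ = ENNReal.ofReal (g t) := by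
                  rw [← ENNReal.ofReal_mul (inv_nonneg.mpr h0t.le), hg,
                    Real.log_div (ne_of_gt hty) (ne_of_gt h0t)]
          · rw [Set.indicator_of_mem (by exact ht : t ∈ Ici ε),
              Set.indicator_of_notMem (fun hmem => ht2 hmem.2)]
            rw [Lam_eq_zero h0t (by linarith : y - t < t), mul_zero]
        · rw [Set.indicator_of_notMem (by exact ht : t ∉ Ici ε)]
          exact zero_le
      refine le_trans (lintegral_mono hptwise) ?_
      rw [lintegral_indicator measurableSet_Icc]
      have hne1 : ∀ t ∈ Icc ε (y/2), t ≠ 0 := fun t htm => ne_of_gt (hε.trans_le htm.1)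
      have hne2 : ∀ t ∈ Icc ε (y/2), y - t ≠ 0 := fun t htm => ne_of_gt (by
        have := htm.2; linarith)
      have hgc : ContinuousOn g (Icc ε (y/2)) := by
        apply ContinuousOn.mul
        · exact continuousOn_id.inv₀ hne1
        · apply ContinuousOn.div
          · exact ContinuousOn.pow (ContinuousOn.sub
              (ContinuousOn.log ((continuous_const.sub continuous_id).continuousOn)
                hne2)
              (ContinuousOn.log continuousOn_id hne1)) n
          · exact (continuous_const.mul (continuous_const.sub continuous_id)).continuousOn
          · intro t htm
            exact mul_ne_zero (Nat.cast_ne_zero.mpr n.factorial_ne_zero) (hne2 t htm)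
      have hInt : IntegrableOn g (Icc ε (y/2)) := hgc.integrableOn_compact isCompact_Icc
      have hnn : 0 ≤ᵐ[volume.restrict (Icc ε (y/2))] g := by
        refine (ae_restrict_iff' measurableSet_Icc).mpr (ae_of_all _ fun t htm => ?_)
        have h0t : 0 < t := hε.trans_le htm.1
        have hty : 0 < y - t := by have := htm.2; linarith
        have hlog : 0 ≤ Real.log (y - t) - Real.log t := by
          rw [sub_nonneg]
          exact Real.log_le_log h0t (by have := htm.2; linarith)
        have : 0 ≤ (Real.log (y - t) - Real.log t) ^ n := pow_nonneg hlog n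
        positivity
      rw [← MeasureTheory.ofReal_integral_eq_lintegral_ofReal hInt hnn]
      apply ENNReal.ofReal_le_ofReal
      -- real inequality via FTC
      rw [MeasureTheory.integral_Icc_eq_integral_Ioc, ← intervalIntegral.integral_of_le hhalf]
      set u : ℝ → ℝ := fun t => Real.log (y - t) - Real.log t with hu
      set F : ℝ → ℝ := fun t => -(u t)^(n+1) / ((n+1).factorial * y) with hFdef
      have hderiv : ∀ t ∈ uIcc ε (y/2), HasDerivAt F (g t) t := by
        intro t htm
        rw [uIcc_of_le hhalf] at htm
        have h0t : 0 < t := hε.trans_le htm.1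
        have hty : 0 < y - t := by have := htm.2; linarith
        have h1 : HasDerivAt (fun s : ℝ => Real.log (y - s)) ((0 - 1)/(y - t)) t :=
          HasDerivAt.log ((hasDerivAt_const t y).sub (hasDerivAt_id t)) (ne_of_gt hty)
        have h2 : HasDerivAt Real.log t⁻¹ t := Real.hasDerivAt_log (ne_of_gt h0t)
        have hud : HasDerivAt u ((0 - 1)/(y - t) - t⁻¹) t := h1.sub h2
        have hvd : HasDerivAt (fun s => (u s)^(n+1))
            ((n+1) * (u t)^n * ((0 - 1)/(y - t) - t⁻¹)) t := by
          simpa using hud.fun_pow (n+1)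
        have hFd : HasDerivAt F
            (-((n+1) * (u t)^n * ((0 - 1)/(y - t) - t⁻¹)) / ((n+1).factorial * y)) t :=
          hvd.neg.div_const _
        convert hFd using 1
        rw [hg, Nat.factorial_succ]
        have hfne : ((n.factorial : ℝ)) ≠ 0 := Nat.cast_ne_zero.mpr n.factorial_ne_zero
        push_cast
        field_simp
        ring
      have hint : IntervalIntegrable g volume ε (y/2) := by
        apply ContinuousOn.intervalIntegrable
        rwa [uIcc_of_le hhalf]
      rw [intervalIntegral.integral_eq_sub_of_hasDerivAt hderiv hint]
      have hu2 : u (y/2) = 0 := by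
        rw [hu]
        have : y - y/2 = y/2 := by ring
        simp [this]
      have huε : 0 ≤ u ε := by
        rw [hu, sub_nonneg]
        exact Real.log_le_log hε (by linarith)
      have huε2 : u ε ≤ Real.log (y/ε) := by
        show Real.log (y - ε) - Real.log ε ≤ Real.log (y/ε)
        rw [← Real.log_div (ne_of_gt (by linarith : (0:ℝ) < y - ε)) (ne_of_gt hε)]
        apply Real.log_le_log (div_pos (by linarith) hε)
        rw [div_le_div_iff₀ (by linarith) hε]
        nlinarith
      rw [hFdef]
      simp only [hu2, zero_pow (Nat.succ_ne_zero n), neg_zero, zero_div, zero_sub, neg_neg,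
        neg_div]
      gcongr
    · -- degenerate case : ε > y/2
      have hz : ∀ t : ℝ,
          Set.indicator (Ici ε) (fun t => ENNReal.ofReal t⁻¹ * Lam n (y - t) t) t = 0 := by
        intro t
        by_cases ht : ε ≤ t
        · rw [Set.indicator_of_mem (by exact ht : t ∈ Ici ε),
            Lam_eq_zero (hε.trans_le ht) (by linarith : y - t < t), mul_zero]
        · rw [Set.indicator_of_notMem (by exact ht : t ∉ Ici ε)]
      simp only [hz, lintegral_zero]
      exact zero_le

lemma volume_univ_fin0 : (volume : Measure (Fin 0 → ℝ)) Set.univ = 1 := by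
  rw [MeasureTheory.volume_pi, Measure.pi_univ]
  simp

lemma lintegral_comp_perm {n : ℕ} (σ : Equiv.Perm (Fin n)) {F : (Fin n → ℝ) → ℝ≥0∞}
    (hF : Measurable F) :
    ∫⁻ b : Fin n → ℝ, F (fun i => b (σ i)) = ∫⁻ b, F b := by
  rw [← (MeasureTheory.volume_measurePreserving_piCongrLeft
    (fun _ : Fin n => ℝ) σ.symm).lintegral_comp hF]
  congr 1
  ext b
  congr 1
  ext i
  simp [MeasurableEquiv.piCongrLeft, Equiv.piCongrLeft_apply]

lemma lintegral_pi_prod : ∀ (n : ℕ) (G : Fin n → ℝ → ℝ≥0∞), (∀ i, Measurable (G i)) →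
    ∫⁻ b : Fin n → ℝ, ∏ i, G i (b i) = ∏ i, ∫⁻ t, G i t := by
  intro n
  induction n with
  | zero =>
    intro G hG
    simp [lintegral_const, volume_univ_fin0]
  | succ n ih =>
    intro G hG
    have hmp : MeasurePreserving
        (MeasurableEquiv.piFinSuccAbove (fun _ : Fin (n+1) => ℝ) 0).symm
        (volume : Measure (ℝ × (Fin n → ℝ))) volume :=
      (MeasureTheory.volume_preserving_piFinSuccAbove (fun _ : Fin (n+1) => ℝ) 0).symm
    have he : ∀ (t : ℝ) (c : Fin n → ℝ),
        (MeasurableEquiv.piFinSuccAbove (fun _ : Fin (n+1) => ℝ) 0).symm (t, c)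
          = Fin.cons t c := by
      intro t c
      simp [MeasurableEquiv.piFinSuccAbove, MeasurableEquiv.symm, Fin.insertNthEquiv,
        Fin.insertNth_zero']
    rw [← hmp.lintegral_comp_emb (MeasurableEquiv.measurableEmbedding _)
      (fun b => ∏ i, G i (b i)), Measure.volume_eq_prod]
    have hpt : ∀ p : ℝ × (Fin n → ℝ),
        ∏ i, G i (((MeasurableEquiv.piFinSuccAbove (fun _ : Fin (n+1) => ℝ) 0).symm p) i)
          = G 0 p.1 * ∏ i, G i.succ (p.2 i) := by
      intro p
      rw [show ((MeasurableEquiv.piFinSuccAbove (fun _ : Fin (n+1) => ℝ) 0).symm p)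
          = Fin.cons p.1 p.2 by rw [← he p.1 p.2]]
      rw [Fin.prod_univ_succ]
      simp
    simp only [hpt]
    have hgm : Measurable (fun c : Fin n → ℝ => ∏ i, G i.succ (c i)) := by
      apply Finset.measurable_prod
      intro i _
      exact (hG i.succ).comp (measurable_pi_apply i)
    rw [lintegral_prod_mul (f := G 0) (g := fun c : Fin n → ℝ => ∏ i, G i.succ (c i))
      (hG 0).aemeasurable hgm.aemeasurable]
    rw [ih (fun i => G i.succ) (fun i => hG i.succ), Fin.prod_univ_succ]

lemma lintegral_indicator_inv {e T : ℝ} (he : 0 < e) (hT : e ≤ T) :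
    ∫⁻ t : ℝ, (Icc e T).indicator (fun t => ENNReal.ofReal t⁻¹) t
      = ENNReal.ofReal (Real.log (T/e)) := by
  rw [lintegral_indicator measurableSet_Icc]
  have hInt : IntegrableOn (fun t : ℝ => t⁻¹) (Icc e T) :=
    (continuousOn_id.inv₀ fun t ht => ne_of_gt (he.trans_le ht.1)).integrableOn_compact
      isCompact_Icc
  have hnn : 0 ≤ᵐ[volume.restrict (Icc e T)] fun t : ℝ => t⁻¹ :=
    (ae_restrict_iff' measurableSet_Icc).mpr
      (ae_of_all _ fun t ht => inv_nonneg.mpr (he.trans_le ht.1).le)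
  rw [← MeasureTheory.ofReal_integral_eq_lintegral_ofReal hInt hnn]
  congr 1
  have h0 : (0:ℝ) ∉ uIcc e T := by
    rw [uIcc_of_le hT]
    rintro ⟨h0, -⟩
    exact absurd he (not_lt.mpr h0)
  rw [MeasureTheory.integral_Icc_eq_integral_Ioc, ← intervalIntegral.integral_of_le hT]
  open intervalIntegral in rw [integral_inv h0]

lemma lintegral_indicator_one {e T : ℝ} :
    ∫⁻ t : ℝ, (Icc e T).indicator (fun _ => (1:ℝ≥0∞)) t = ENNReal.ofReal (T - e) := by
  rw [lintegral_indicator measurableSet_Icc, lintegral_const, Measure.restrict_apply_univ,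
    Real.volume_Icc, one_mul]

set_option maxHeartbeats 1000000 in
lemma Lam_ge (A : ℝ) (hA : 1 ≤ A) (n : ℕ) (y ε : ℝ) (hε : 0 < ε)
    (hy100 : 100*A^2*ε ≤ y) (hk : (n:ℝ) + 1 ≤ A * Real.log (y/ε)) :
    ENNReal.ofReal ((Real.exp (-(8*A*Real.log (32*A)))/2) *
      (Real.log (y/ε) ^ n / (n.factorial * y))) ≤ Lam n y ε := by
  classical
  have hA0 : (0:ℝ) < A := lt_of_lt_of_le one_pos hA
  have hy : 0 < y := lt_of_lt_of_le (by positivity) hy100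
  set CA : ℝ := Real.exp (-(8*A*Real.log (32*A)))/2 with hCAdef
  set L : ℝ := Real.log (y/ε) with hLdef
  set T : ℝ := y/(32*A) with hTdef
  set g : ℝ := Real.log (32*A) with hgdef
  set L1 : ℝ := Real.log (T/ε) with hL1def
  have hyε : 100*A^2 ≤ y/ε := (le_div_iff₀ hε).mpr hy100
  have hlogA : 0 ≤ Real.log A := Real.log_nonneg hA
  have hlog2 : 0 < Real.log 2 := Real.log_pos one_lt_two
  have h64 : Real.log (64*A^2) = 6*Real.log 2 + 2*Real.log A := by
    rw [show (64:ℝ)*A^2 = 2^6 * A^2 by norm_num,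
      Real.log_mul (by positivity) (by positivity), Real.log_pow, Real.log_pow]
    push_cast; ring
  have hL64 : 6*Real.log 2 + 2*Real.log A ≤ L := by
    rw [← h64, hLdef]
    apply Real.log_le_log (by positivity)
    nlinarith
  have hgeq : g = 5*Real.log 2 + Real.log A := by
    rw [hgdef, show (32:ℝ)*A = 2^5 * A by norm_num,
      Real.log_mul (by positivity) (ne_of_gt hA0), Real.log_pow]
    push_cast; ring
  have hgL : 8 * g ≤ 7 * L := by rw [hgeq]; linarith
  have hg0 : 0 ≤ g := by rw [hgeq]; positivity
  have hLpos : 0 < L := by nlinarith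
  have hL1eq : L1 = L - g := by
    have hTε : T/ε = (y/ε)/(32*A) := by rw [hTdef]; ring
    rw [hL1def, hTε, Real.log_div (ne_of_gt (by positivity)) (ne_of_gt (by positivity)),
      hLdef, hgdef]
  have hL8 : L ≤ 8 * L1 := by rw [hL1eq]; linarith
  have hL1pos : 0 < L1 := by linarith
  have hεT : ε ≤ T := by rw [hTdef, le_div_iff₀ (by positivity)]; nlinarith
  have hT2 : T ≤ y/2 := by rw [hTdef, div_le_div_iff₀ (by positivity) two_pos]; nlinarith
  have hε2 : ε ≤ y/2 := by nlinarith
  have hn1 : (n:ℝ) ≤ A * L := by linarith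
  -- sets and functions
  set Box : Set (Fin n → ℝ) := {b | ∀ i, b i ∈ Icc ε T} with hBoxdef
  set R : Set (Fin n → ℝ) := Box ∩ {b | ∑ i, b i ≤ y/2} with hRdef
  set Bad : Set (Fin n → ℝ) := Box ∩ {b | ¬ (∑ i, b i ≤ y/2)} with hBaddef
  have hBoxm : MeasurableSet Box := by
    have : Box = ⋂ i, (fun b : Fin n → ℝ => b i) ⁻¹' (Icc ε T) := by
      ext b
      simp [hBoxdef, Set.mem_iInter]
    rw [this]
    exact MeasurableSet.iInter fun i => (measurable_pi_apply i) measurableSet_Icc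
  have hsetm : MeasurableSet {b : Fin n → ℝ | ∑ i, b i ≤ y/2} :=
    measurableSet_le (measurable_sumFin n) measurable_const
  have hRm : MeasurableSet R := hBoxm.inter hsetm
  have hBadm : MeasurableSet Bad := hBoxm.inter hsetm.compl
  set P : (Fin n → ℝ) → ℝ≥0∞ := fun b => ∏ i, ENNReal.ofReal (b i)⁻¹ with hPdef
  have hPm : Measurable P := Finset.univ.measurable_prod fun i _ =>
    (ENNReal.measurable_ofReal.comp measurable_inv).comp (measurable_pi_apply i)
  set G : ℝ → ℝ≥0∞ := (Icc ε T).indicator (fun t => ENNReal.ofReal t⁻¹) with hGdef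
  have hGm : Measurable G :=
    (ENNReal.measurable_ofReal.comp measurable_inv).indicator measurableSet_Icc
  -- the box integral
  have hBoxP : ∀ b : Fin n → ℝ, Box.indicator P b = ∏ i, G (b i) := by
    intro b
    by_cases hb : b ∈ Box
    · rw [Set.indicator_of_mem hb, hPdef]
      refine Finset.prod_congr rfl fun i _ => ?_
      rw [hGdef, Set.indicator_of_mem (hb i)]
    · rw [Set.indicator_of_notMem hb]
      obtain ⟨i, hi⟩ := not_forall.mp hb
      symm
      apply Finset.prod_eq_zero (Finset.mem_univ i)
      rw [hGdef, Set.indicator_of_notMem hi]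
  have hBint : ∫⁻ b in Box, P b = ENNReal.ofReal L1 ^ n := by
    rw [← lintegral_indicator hBoxm]
    simp only [hBoxP]
    rw [lintegral_pi_prod n (fun _ => G) (fun _ => hGm), Finset.prod_const,
      Finset.card_univ, Fintype.card_fin]
    congr 1
    rw [hGdef]
    exact lintegral_indicator_inv hε hεT
  -- splitting
  have hdisj : Disjoint R Bad := by
    rw [Set.disjoint_left]
    rintro b ⟨-, h1⟩ ⟨-, h2⟩
    exact h2 h1
  have hBoxeq : R ∪ Bad = Box := by
    rw [hRdef, hBaddef]
    exact Set.inter_union_compl Box {b | ∑ i, b i ≤ y/2}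
  have hsplit : ∫⁻ b in Box, P b = (∫⁻ b in R, P b) + ∫⁻ b in Bad, P b := by
    rw [← hBoxeq, lintegral_union hBadm hdisj]
  -- bound on the bad part
  set dB : ℝ := (2/y) * (n * ((T-ε) * L1^(n-1))) with hdBdef
  have hDb : ∫⁻ b in Bad, P b ≤ ENNReal.ofReal dB := by
    have hstep1 : ∫⁻ b in Bad, P b
        ≤ ∫⁻ b in Bad, (ENNReal.ofReal (2/y) * ∑ j, ENNReal.ofReal (b j)) * P b := by
      refine setLIntegral_mono' hBadm fun b hb => ?_
      obtain ⟨hbBox, hbSum⟩ := hb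
      have hb0 : ∀ j, (0:ℝ) ≤ b j := fun j => le_trans hε.le (hbBox j).1
      have hone : (1:ℝ≥0∞) ≤ ENNReal.ofReal (2/y) * ∑ j, ENNReal.ofReal (b j) := by
        rw [← ENNReal.ofReal_sum_of_nonneg (fun j _ => hb0 j),
          ← ENNReal.ofReal_mul (by positivity)]
        rw [← ENNReal.ofReal_one]
        apply ENNReal.ofReal_le_ofReal
        have : y/2 < ∑ j, b j := not_le.mp hbSum
        rw [div_mul_eq_mul_div, le_div_iff₀ hy]
        linarith
      calc P b = 1 * P b := (one_mul _).symm
        _ ≤ (ENNReal.ofReal (2/y) * ∑ j, ENNReal.ofReal (b j)) * P b :=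
            mul_le_mul_left hone _
    have hstep2 : ∫⁻ b in Bad, (ENNReal.ofReal (2/y) * ∑ j, ENNReal.ofReal (b j)) * P b
        ≤ ∫⁻ b in Box, (ENNReal.ofReal (2/y) * ∑ j, ENNReal.ofReal (b j)) * P b :=
      lintegral_mono_set (hBoxeq ▸ Set.subset_union_right)
    -- per-coordinate integrals
    have hjint : ∀ j : Fin n,
        ∫⁻ b in Box, ENNReal.ofReal (b j) * P b
          = ENNReal.ofReal (T-ε) * ENNReal.ofReal L1 ^ (n-1) := by
      intro j
      set Gj : Fin n → ℝ → ℝ≥0∞ := fun i =>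
        if i = j then (Icc ε T).indicator (fun _ => (1:ℝ≥0∞)) else G with hGjdef
      have hGjm : ∀ i, Measurable (Gj i) := by
        intro i
        simp only [hGjdef]
        split_ifs with h
        · exact measurable_const.indicator measurableSet_Icc
        · exact hGm
      have hpt : ∀ b : Fin n → ℝ,
          Box.indicator (fun b => ENNReal.ofReal (b j) * P b) b = ∏ i, Gj i (b i) := by
        intro b
        by_cases hb : b ∈ Box
        · rw [Set.indicator_of_mem hb]
          simp only [hPdef]
          have hbj : 0 < b j := lt_of_lt_of_le hε (hb j).1
          rw [← Finset.mul_prod_erase Finset.univ (fun i => ENNReal.ofReal (b i)⁻¹)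
            (Finset.mem_univ j),
            ← Finset.mul_prod_erase Finset.univ (fun i => Gj i (b i)) (Finset.mem_univ j)]
          have h1 : Gj j (b j) = 1 := by
            rw [show Gj j = (Icc ε T).indicator (fun _ => (1:ℝ≥0∞)) by simp [hGjdef],
              Set.indicator_of_mem (hb j)]
          have h2 : ∀ i ∈ Finset.univ.erase j, Gj i (b i) = ENNReal.ofReal (b i)⁻¹ := by
            intro i hi
            simp only [hGjdef]
            rw [if_neg (Finset.mem_erase.mp hi).1, hGdef, Set.indicator_of_mem (hb i)]
          rw [h1, Finset.prod_congr rfl h2, one_mul, ← mul_assoc,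
            ← ENNReal.ofReal_mul hbj.le, mul_inv_cancel₀ (ne_of_gt hbj), ENNReal.ofReal_one,
            one_mul]
        · rw [Set.indicator_of_notMem hb]
          obtain ⟨i, hi⟩ := not_forall.mp hb
          symm
          apply Finset.prod_eq_zero (Finset.mem_univ i)
          simp only [hGjdef]
          by_cases h : i = j
          · rw [if_pos h, Set.indicator_of_notMem (h ▸ hi)]
          · rw [if_neg h, hGdef, Set.indicator_of_notMem hi]
      rw [← lintegral_indicator hBoxm]
      simp only [hpt]
      rw [lintegral_pi_prod n Gj hGjm,
        ← Finset.mul_prod_erase Finset.univ (fun i => ∫⁻ t, Gj i t) (Finset.mem_univ j)]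
      have h1 : ∫⁻ t, Gj j t = ENNReal.ofReal (T-ε) := by
        rw [show Gj j = (Icc ε T).indicator (fun _ => (1:ℝ≥0∞)) by simp [hGjdef]]
        exact lintegral_indicator_one
      have h2 : ∀ i ∈ Finset.univ.erase j, ∫⁻ t, Gj i t = ENNReal.ofReal L1 := by
        intro i hi
        rw [show Gj i = G by simp [hGjdef, (Finset.mem_erase.mp hi).1], hGdef]
        exact lintegral_indicator_inv hε hεT
      rw [h1, Finset.prod_congr rfl h2, Finset.prod_const,
        Finset.card_erase_of_mem (Finset.mem_univ j), Finset.card_univ, Fintype.card_fin]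
    have hstep3 : ∫⁻ b in Box, (ENNReal.ofReal (2/y) * ∑ j, ENNReal.ofReal (b j)) * P b
        ≤ ENNReal.ofReal dB := by
      have hfun : ∀ b : Fin n → ℝ,
          (ENNReal.ofReal (2/y) * ∑ j, ENNReal.ofReal (b j)) * P b
            = ENNReal.ofReal (2/y) * ∑ j, ENNReal.ofReal (b j) * P b := by
        intro b
        rw [mul_assoc, Finset.sum_mul]
      simp only [hfun]
      have hsm1 : ∀ j : Fin n, Measurable (fun b : Fin n → ℝ => ENNReal.ofReal (b j) * P b) := by
        intro j
        exact (ENNReal.measurable_ofReal.comp (measurable_pi_apply j)).mul hPm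
      have hsm : Measurable (fun b : Fin n → ℝ => ∑ j, ENNReal.ofReal (b j) * P b) := by
        apply Finset.measurable_sum
        intro j _
        exact hsm1 j
      rw [lintegral_const_mul _ hsm, lintegral_finset_sum _ (fun j _ => hsm1 j)]
      simp only [hjint]
      rw [Finset.sum_const, Finset.card_univ, Fintype.card_fin, nsmul_eq_mul]
      rw [hdBdef]
      rw [ENNReal.ofReal_mul (by positivity), ENNReal.ofReal_mul (n.cast_nonneg),
        ENNReal.ofReal_mul (by linarith : (0:ℝ) ≤ T - ε),
        ENNReal.ofReal_pow hL1pos.le, ENNReal.ofReal_natCast]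
    exact le_trans hstep1 (le_trans hstep2 hstep3)
  -- real bound on dB
  have hdB2 : dB ≤ L1^n/2 := by
    cases n with
    | zero => simp [hdBdef]
    | succ m =>
      have hcast : ((m+1 : ℕ) : ℝ) = (m:ℝ)+1 := by push_cast; ring
      have hp : (0:ℝ) ≤ L1^m := pow_nonneg hL1pos.le m
      have hm1 : ((m:ℝ)+1) ≤ A*L := by
        have := hn1
        push_cast at this
        linarith
      have e1 : (0:ℝ) ≤ T - ε := by linarith
      have hb1 : ((m+1:ℕ):ℝ) * ((T-ε) * L1^(m+1-1)) ≤ (A*L) * (T * L1^m) := by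
        rw [hcast]
        simp only [Nat.add_sub_cancel]
        have h2 : (T-ε) * L1^m ≤ T * L1^m := mul_le_mul_of_nonneg_right (by linarith) hp
        exact mul_le_mul hm1 h2 (mul_nonneg e1 hp) (le_of_lt (mul_pos hA0 hLpos))
      calc dB ≤ (2/y) * ((A*L) * (T * L1^m)) := by
            rw [hdBdef]
            apply mul_le_mul_of_nonneg_left hb1 (by positivity)
        _ = (L/16) * L1^m := by
            rw [hTdef]
            field_simp
            ring
        _ ≤ (L1/2) * L1^m := by
            apply mul_le_mul_of_nonneg_right _ hp
            linarith
        _ = L1^(m+1)/2 := by rw [pow_succ]; ring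
  -- lower bound for the good part
  have hDfin : ∫⁻ b in Bad, P b ≠ ⊤ := ne_top_of_le_ne_top ENNReal.ofReal_ne_top hDb
  have hQ : ENNReal.ofReal (L1^n/2) ≤ ∫⁻ b in R, P b := by
    have h1 : ENNReal.ofReal (L1^n/2) + ∫⁻ b in Bad, P b
        ≤ (∫⁻ b in R, P b) + ∫⁻ b in Bad, P b := by
      rw [← hsplit, hBint]
      calc ENNReal.ofReal (L1^n/2) + ∫⁻ b in Bad, P b
          ≤ ENNReal.ofReal (L1^n/2) + ENNReal.ofReal (L1^n/2) :=
            add_le_add_right (le_trans hDb (ENNReal.ofReal_le_ofReal hdB2)) _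
        _ = ENNReal.ofReal (L1^n) := by
            rw [← ENNReal.ofReal_add (by positivity) (by positivity)]
            congr 1
            ring
        _ = ENNReal.ofReal L1 ^ n := ENNReal.ofReal_pow hL1pos.le n
    exact (ENNReal.add_le_add_iff_right hDfin).mp h1
  -- comparing the integrand with P on R
  have hffP : ∀ b ∈ R, ENNReal.ofReal y⁻¹ * P b ≤ ff n y b := by
    rintro b ⟨hbBox, hbSum⟩
    have hbpos : ∀ i, 0 < b i := fun i => lt_of_lt_of_le hε (hbBox i).1
    have hProdPos : 0 < ∏ i, b i := Finset.prod_pos fun i _ => hbpos i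
    have hSum0 : 0 ≤ ∑ i, b i := Finset.sum_nonneg fun i _ => (hbpos i).le
    have hySum : 0 < y - ∑ i, b i := by
      have : (∑ i, b i) ≤ y/2 := hbSum
      linarith
    have h1 : ff n y b = ENNReal.ofReal ((∏ i, b i)⁻¹) * ENNReal.ofReal ((y - ∑ i, b i)⁻¹) := by
      rw [ff, mul_inv, ENNReal.ofReal_mul (by positivity)]
    have h2 : ENNReal.ofReal ((∏ i, b i)⁻¹) = P b := by
      simp only [hPdef]
      rw [← Finset.prod_inv_distrib]
      exact ENNReal.ofReal_prod_of_nonneg (fun i _ => inv_nonneg.mpr (hbpos i).le)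
    rw [h1, h2, mul_comm]
    apply mul_le_mul_right
    apply ENNReal.ofReal_le_ofReal
    apply inv_anti₀ hySum
    linarith
  have hRff : ENNReal.ofReal y⁻¹ * ENNReal.ofReal (L1^n/2) ≤ ∫⁻ b in R, ff n y b := by
    calc ENNReal.ofReal y⁻¹ * ENNReal.ofReal (L1^n/2)
        ≤ ENNReal.ofReal y⁻¹ * ∫⁻ b in R, P b := mul_le_mul_right hQ _
      _ = ∫⁻ b in R, ENNReal.ofReal y⁻¹ * P b := (lintegral_const_mul _ hPm).symm
      _ ≤ ∫⁻ b in R, ff n y b := setLIntegral_mono' hRm hffP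
  -- sorting
  have hsort : ∫⁻ b in R, ff n y b ≤ (n.factorial : ℝ≥0∞) * Lam n y ε := by
    have hsub : R ⊆ ⋃ σ : Equiv.Perm (Fin n),
        {b : Fin n → ℝ | (fun i => b (σ i)) ∈ Sset n y ε} := by
      rintro b ⟨hbBox, hbSum⟩
      refine Set.mem_iUnion.mpr ⟨Tuple.sort b, ?_⟩
      have hmono := Tuple.monotone_sort b
      have hsum : ∑ i, b (Tuple.sort b i) = ∑ i, b i := Equiv.sum_comp _ b
      have hbSum' : ∑ i, b i ≤ y/2 := hbSum
      refine ⟨fun i j hij => hmono hij, fun i => (hbBox _).1, fun i => ?_, ?_⟩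
      · show b (Tuple.sort b i) ≤ y - ∑ j, b (Tuple.sort b j)
        rw [hsum]
        have := (hbBox (Tuple.sort b i)).2
        linarith [hT2]
      · show ε ≤ y - ∑ j, b (Tuple.sort b j)
        rw [hsum]
        linarith [hε2]
    have hperm : ∀ σ : Equiv.Perm (Fin n),
        ∫⁻ b in {b : Fin n → ℝ | (fun i => b (σ i)) ∈ Sset n y ε}, ff n y b
          = Lam n y ε := by
      intro σ
      have hTσm : MeasurableSet {b : Fin n → ℝ | (fun i => b (σ i)) ∈ Sset n y ε} :=
        (measurable_pi_lambda _ fun i => measurable_pi_apply (σ i)) (measurableSet_Sset n y ε)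
      have hkey : ∀ b : Fin n → ℝ,
          Set.indicator {b : Fin n → ℝ | (fun i => b (σ i)) ∈ Sset n y ε} (ff n y) b
            = Set.indicator (Sset n y ε) (ff n y) (fun i => b (σ i)) := by
        intro b
        by_cases hb : (fun i => b (σ i)) ∈ Sset n y ε
        · rw [Set.indicator_of_mem hb,
            Set.indicator_of_mem
              (show b ∈ {c : Fin n → ℝ | (fun i => c (σ i)) ∈ Sset n y ε} from hb)]
          rw [ff, ff, Equiv.prod_comp σ b, Equiv.sum_comp σ b]
        · rw [Set.indicator_of_notMem hb,
            Set.indicator_of_notMem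
              (show b ∉ {c : Fin n → ℝ | (fun i => c (σ i)) ∈ Sset n y ε} from hb)]
      rw [← lintegral_indicator hTσm]
      simp only [hkey]
      rw [lintegral_comp_perm σ ((measurable_ff n y).indicator (measurableSet_Sset n y ε)),
        lintegral_indicator (measurableSet_Sset n y ε)]
      rfl
    calc ∫⁻ b in R, ff n y b
        ≤ ∫⁻ b in ⋃ σ : Equiv.Perm (Fin n),
            {b : Fin n → ℝ | (fun i => b (σ i)) ∈ Sset n y ε}, ff n y b :=
          lintegral_mono_set hsub
      _ ≤ ∑' σ : Equiv.Perm (Fin n),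
            ∫⁻ b in {b : Fin n → ℝ | (fun i => b (σ i)) ∈ Sset n y ε}, ff n y b :=
          lintegral_iUnion_le _ _
      _ = ∑ σ : Equiv.Perm (Fin n),
            ∫⁻ b in {b : Fin n → ℝ | (fun i => b (σ i)) ∈ Sset n y ε}, ff n y b :=
          tsum_fintype _
      _ = ∑ _σ : Equiv.Perm (Fin n), Lam n y ε := by
          exact Finset.sum_congr rfl fun σ _ => hperm σ
      _ = (n.factorial : ℝ≥0∞) * Lam n y ε := by
          rw [Finset.sum_const, Finset.card_univ, Fintype.card_perm, Fintype.card_fin,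
            nsmul_eq_mul]
  -- final numeric comparison
  have hexp : Real.exp (-(8*A*g)) * L^n ≤ L1^n := by
    have hLL : (0:ℝ) < L1/L := div_pos hL1pos hLpos
    have hlogineq : -(8*A*g) ≤ (n:ℝ) * Real.log (L1/L) := by
      have h1 : Real.log (L/L1) ≤ L/L1 - 1 := Real.log_le_sub_one_of_pos (div_pos hLpos hL1pos)
      have h2 : Real.log (L1/L) = - Real.log (L/L1) := by
        rw [← Real.log_inv, inv_div]
      have h4 : (1:ℝ) - L/L1 = -(g/L1) := by
        field_simp
        linarith [hL1eq]
      have h3 : -(g/L1) ≤ Real.log (L1/L) := by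
        rw [← h4, h2]
        linarith
      have h5 : (n:ℝ) * (-(g/L1)) ≤ (n:ℝ) * Real.log (L1/L) :=
        mul_le_mul_of_nonneg_left h3 n.cast_nonneg
      have h6 : (n:ℝ) ≤ 8*A*L1 := by nlinarith
      have h7 : (n:ℝ) * g ≤ 8*A*L1*g := mul_le_mul_of_nonneg_right h6 hg0
      have h8 : (n:ℝ) * (g/L1) ≤ 8*A*g := by
        rw [mul_div_assoc'] at *
        rw [div_le_iff₀ hL1pos]
        nlinarith
      nlinarith
    have h5 : Real.exp (-(8*A*g)) ≤ (L1/L)^n := by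
      rw [← Real.exp_log (pow_pos hLL n), Real.log_pow]
      exact Real.exp_le_exp.mpr hlogineq
    calc Real.exp (-(8*A*g)) * L^n ≤ (L1/L)^n * L^n :=
        mul_le_mul_of_nonneg_right h5 (pow_nonneg hLpos.le n)
      _ = L1^n := by
          rw [div_pow]
          field_simp
  have hrealkey : (n.factorial:ℝ) * (CA * (L^n/(n.factorial * y))) ≤ y⁻¹ * (L1^n/2) := by
    have hfpos : (0:ℝ) < (n.factorial:ℝ) := Nat.cast_pos.mpr n.factorial_pos
    have h1 : (n.factorial:ℝ) * (CA * (L^n/(n.factorial * y))) = CA * L^n / y := by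
      field_simp
    rw [h1, hCAdef]
    rw [div_le_iff₀ hy]
    have : y⁻¹ * (L1^n/2) * y = L1^n/2 := by field_simp
    rw [this]
    calc Real.exp (-(8*A*g))/2 * L^n = (Real.exp (-(8*A*g)) * L^n)/2 := by ring
      _ ≤ L1^n/2 := by linarith [hexp]
  have hmain : (n.factorial : ℝ≥0∞) * ENNReal.ofReal (CA * (L^n/(n.factorial * y)))
      ≤ (n.factorial : ℝ≥0∞) * Lam n y ε := by
    calc (n.factorial : ℝ≥0∞) * ENNReal.ofReal (CA * (L^n/(n.factorial * y)))
        = ENNReal.ofReal ((n.factorial:ℝ) * (CA * (L^n/(n.factorial * y)))) := by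
          rw [ENNReal.ofReal_mul (Nat.cast_nonneg _), ENNReal.ofReal_natCast]
      _ ≤ ENNReal.ofReal (y⁻¹ * (L1^n/2)) := ENNReal.ofReal_le_ofReal hrealkey
      _ = ENNReal.ofReal y⁻¹ * ENNReal.ofReal (L1^n/2) :=
          ENNReal.ofReal_mul (by positivity)
      _ ≤ ∫⁻ b in R, ff n y b := hRff
      _ ≤ (n.factorial : ℝ≥0∞) * Lam n y ε := hsort
  have hfact0 : ((n.factorial : ℝ≥0∞)) ≠ 0 := by
    simp [Nat.factorial_ne_zero]
  have hfacttop : ((n.factorial : ℝ≥0∞)) ≠ ⊤ := ENNReal.natCast_ne_top _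
  exact (ENNReal.mul_le_mul_iff_right hfact0 hfacttop).mp hmain

end SimplexAux
end

/-- `m_k(y,ε) = ∫_{ε ≤ ξ₁ ≤ ⋯ ≤ ξ_k, ξ₁+⋯+ξ_k = y} dξ/(ξ₁⋯ξ_k)`, the integral over the
simplex being taken with respect to the projection measure onto the first `k-1`
coordinates (the last coordinate being `ξ_k = y - (ξ₁+⋯+ξ_{k-1})`). -/
noncomputable def mSimplex (k : ℕ) (y ε : ℝ) : ℝ :=
  ∫ b in {b : Fin (k - 1) → ℝ |
      (∀ i j : Fin (k - 1), i ≤ j → b i ≤ b j) ∧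
      (∀ i, ε ≤ b i) ∧ (∀ i, b i ≤ y - ∑ j, b j) ∧ ε ≤ y - ∑ j, b j},
    ((∏ i, b i) * (y - ∑ j, b j))⁻¹

lemma mSimplex_eq (k : ℕ) (y ε : ℝ) (hε : 0 < ε) :
    mSimplex k y ε = (SimplexAux.Lam (k - 1) y ε).toReal := by
  have hSm := SimplexAux.measurableSet_Sset (k-1) y ε
  have hnn : 0 ≤ᵐ[volume.restrict (SimplexAux.Sset (k-1) y ε)]
      fun b : Fin (k-1) → ℝ => ((∏ i, b i) * (y - ∑ j, b j))⁻¹ := by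
    refine (ae_restrict_iff' hSm).mpr (ae_of_all _ fun b hb => ?_)
    obtain ⟨-, h2, -, h4⟩ := hb
    have hp : 0 < ∏ i, b i := Finset.prod_pos fun i _ => lt_of_lt_of_le hε (h2 i)
    have hq : 0 < y - ∑ j, b j := lt_of_lt_of_le hε h4
    positivity
  have hmeas : AEStronglyMeasurable (fun b : Fin (k-1) → ℝ => ((∏ i, b i) * (y - ∑ j, b j))⁻¹)
      (volume.restrict (SimplexAux.Sset (k-1) y ε)) := by
    apply Measurable.aestronglyMeasurable
    exact (((Finset.univ.measurable_prod fun i _ => measurable_pi_apply i)).mul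
      (measurable_const.sub (SimplexAux.measurable_sumFin _))).inv
  have h0 : mSimplex k y ε
      = ∫ b in SimplexAux.Sset (k-1) y ε, ((∏ i, b i) * (y - ∑ j, b j))⁻¹ := rfl
  rw [h0, MeasureTheory.integral_eq_lintegral_of_nonneg_ae hnn hmeas]
  rfl

/-- For `k ≥ 1`, `ε > 0`, `y ≥ ε`:
`m_k(y,ε) ≤ (log(y/ε))^(k-1)/((k-1)!·y)`.  Moreover, for any fixed `A ≥ 1` there is a
constant `C > 0` (depending only on `A`) such that uniformly for `y ≥ 100A²ε > 0` and
`1 ≤ k ≤ A log(y/ε)` one has `m_k(y,ε) ≥ C (log(y/ε))^(k-1)/((k-1)!·y)`. -/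
theorem mSimplex_bounds :
    (∀ (k : ℕ) (y ε : ℝ), 1 ≤ k → 0 < ε → ε ≤ y →
      mSimplex k y ε ≤ Real.log (y / ε) ^ (k - 1) / ((k - 1).factorial * y)) ∧
    (∀ A : ℝ, 1 ≤ A → ∃ C : ℝ, 0 < C ∧
      ∀ (k : ℕ) (y ε : ℝ), 0 < ε → 100 * A ^ 2 * ε ≤ y → 1 ≤ k →
        (k : ℝ) ≤ A * Real.log (y / ε) →
        C * (Real.log (y / ε) ^ (k - 1) / ((k - 1).factorial * y)) ≤ mSimplex k y ε) := by
  constructor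
  · intro k y ε _hk hε hεy
    rw [mSimplex_eq k y ε hε]
    have hle := SimplexAux.Lam_le (k-1) y ε hε hεy
    have hlog : 0 ≤ Real.log (y/ε) := Real.log_nonneg ((one_le_div hε).mpr hεy)
    have hy : 0 < y := lt_of_lt_of_le hε hεy
    refine ENNReal.toReal_le_of_le_ofReal ?_ hle
    have hf : (0:ℝ) < ((k-1).factorial : ℝ) := Nat.cast_pos.mpr (k-1).factorial_pos
    exact div_nonneg (pow_nonneg hlog _) (by positivity)
  · intro A hA
    have hA0 : (0:ℝ) < A := lt_of_lt_of_le one_pos hA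
    refine ⟨Real.exp (-(8*A*Real.log (32*A)))/2, by positivity, ?_⟩
    intro k y ε hε hy hk1 hkA
    have hy0 : 0 < y := lt_of_lt_of_le (by positivity) hy
    have hεy : ε ≤ y := by
      have h1 : (1:ℝ) ≤ 100*A^2 := by nlinarith
      have h2 := mul_le_mul_of_nonneg_right h1 hε.le
      rw [one_mul] at h2
      linarith
    rw [mSimplex_eq k y ε hε]
    have hkcast : ((k-1 : ℕ) : ℝ) + 1 = (k:ℝ) := by
      rw [← Nat.cast_add_one, Nat.sub_add_cancel hk1]
    have hge := SimplexAux.Lam_ge A hA (k-1) y ε hε hy (by rw [hkcast]; exact hkA)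
    have hfin : SimplexAux.Lam (k-1) y ε ≠ ⊤ :=
      ne_top_of_le_ne_top ENNReal.ofReal_ne_top (SimplexAux.Lam_le (k-1) y ε hε hεy)
    have hmono := ENNReal.toReal_mono hfin hge
    have hlog : 0 ≤ Real.log (y/ε) := Real.log_nonneg ((one_le_div hε).mpr hεy)
    have hf : (0:ℝ) < ((k-1).factorial : ℝ) := Nat.cast_pos.mpr (k-1).factorial_pos
    rwa [ENNReal.toReal_ofReal (by positivity)] at hmono
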